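/- Let p be an odd prime and let b, c be integers. Then (4c - b²)·C(p-2, 0)_{b,c} ≡ C(p-1, -1)_{b,c} + c·C(p-1, 1)_{b,c} - b (mod p). -/

import Mathlib

open Polynomial in
/-- The generalized trinomial coefficient `C(n,k)_{b,c}`: the coefficient of `x^(n+k)`
in `(x² + b·x + c)^n`; it vanishes when `n + k < 0` (in particular when `|k| > n`). -/
noncomputable def gtc (b c : ℤ) (n : ℕ) (k : ℤ) : ℤ :=
  if 0 ≤ (n : ℤ) + k then ((X ^ 2 + C b * X + C c) ^ n).coeff ((n : ℤ) + k).toNat else 0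

open Polynomial

theorem stmt3 (p : ℕ) (hp : p.Prime) (hp2 : p ≠ 2) (b c : ℤ) :
    (4 * c - b ^ 2) * gtc b c (p - 2) 0 ≡
      gtc b c (p - 1) (-1) + c * gtc b c (p - 1) 1 - b [ZMOD (p : ℤ)] := by
  haveI : Fact p.Prime := ⟨hp⟩
  obtain ⟨m, hm⟩ : ∃ m, p = m + 3 := by
    have h2 := hp.two_le
    exact ⟨p - 3, by omega⟩
  subst hm
  set q : ℕ := m + 3 with hq
  have h1 : q - 2 = m + 1 := by omega
  have h2 : q - 1 = m + 2 := by omega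
  rw [gtc, gtc, gtc, h1, h2]
  rw [if_pos (by push_cast; omega), if_pos (by push_cast; omega), if_pos (by push_cast; omega)]
  have e1 : (((m+1 : ℕ) : ℤ) + 0).toNat = m + 1 := by omega
  have e2 : (((m+2 : ℕ) : ℤ) + (-1)).toNat = m + 1 := by omega
  have e3 : (((m+2 : ℕ) : ℤ) + 1).toNat = m + 3 := by omega
  rw [e1, e2, e3]
  rw [← ZMod.intCast_eq_intCast_iff]
  push_cast
  set b' : ZMod q := (b : ZMod q) with hb'
  set c' : ZMod q := (c : ZMod q) with hc'
  set A : (ZMod q)[X] := X ^ 2 + C b' * X + C c' with hA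
  have hcast : ∀ (n k : ℕ), ((((X ^ 2 + C b * X + C c : ℤ[X]) ^ n).coeff k : ℤ) : ZMod q)
      = (A ^ n).coeff k := by
    intro n k
    have h : A ^ n = ((X ^ 2 + C b * X + C c : ℤ[X]) ^ n).map (Int.castRingHom (ZMod q)) := by
      rw [Polynomial.map_pow, Polynomial.map_add, Polynomial.map_add, Polynomial.map_mul,
        Polynomial.map_pow, map_X, map_C, map_C]
      rfl
    rw [h, coeff_map]
    rfl
  rw [hcast, hcast, hcast]
  haveI : CharP (ZMod q) q := ZMod.charP q
  have hAq : A ^ q = X ^ (2 * q) + C b' * X ^ q + C c' := by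
    rw [hA, add_pow_char, add_pow_char, mul_pow, ← C_pow, ← C_pow, ZMod.pow_card, ZMod.pow_card,
      ← pow_mul]
  have hmul : ∀ (f : (ZMod q)[X]) (j : ℕ), (A * f).coeff (j + 2)
      = f.coeff j + b' * f.coeff (j + 1) + c' * f.coeff (j + 2) := by
    intro f j
    rw [hA, add_mul, add_mul, coeff_add, coeff_add, coeff_X_pow_mul, mul_assoc, coeff_C_mul,
      coeff_C_mul]
    congr 2
    exact congrArg (fun z => b' * z) (coeff_X_mul f (j + 1))
  have hAqc : (A ^ q).coeff (m + 3) = b' := by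
    rw [show m + 3 = q from rfl, hAq]
    rw [coeff_add, coeff_add, coeff_X_pow, coeff_C_mul, coeff_X_pow, coeff_C]
    rw [if_neg (show ¬ q = 2 * q by omega), if_pos rfl, if_neg (show ¬ q = 0 by omega)]
    ring
  have hS1 : (A ^ (m+2)).coeff (m+1) + b' * (A ^ (m+2)).coeff (m+2)
      + c' * (A ^ (m+2)).coeff (m+3) = b' := by
    have h := hmul (A ^ (m + 2)) (m + 1)
    rw [← pow_succ'] at h
    have h' : (A ^ q).coeff (m + 3) = (A ^ (m+2)).coeff (m+1) + b' * (A ^ (m+2)).coeff (m+2)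
      + c' * (A ^ (m+2)).coeff (m+3) := h
    rw [hAqc] at h'
    exact h'.symm
  have hdA : derivative A = C 2 * X + C b' := by
    rw [hA]
    simp [derivative_X_pow]
    rw [one_add_one_eq_two, map_ofNat]
  have hm1 : ((m + 1 : ℕ) : ZMod q) = -2 := by
    have h0 : ((m + 3 : ℕ) : ZMod q) = 0 := ZMod.natCast_self q
    push_cast at h0 ⊢
    linear_combination h0
  have hm2 : ((m + 2 : ℕ) : ZMod q) = -1 := by
    have h0 : ((m + 3 : ℕ) : ZMod q) = 0 := ZMod.natCast_self q
    push_cast at h0 ⊢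
    linear_combination h0
  have hm0 : ((m : ℕ) : ZMod q) = -3 := by
    have h0 : ((m + 3 : ℕ) : ZMod q) = 0 := ZMod.natCast_self q
    push_cast at h0 ⊢
    linear_combination h0
  have hder : (C 2 * X + C b') * A ^ (m + 1) = - derivative (A ^ (m + 2)) := by
    rw [derivative_pow, hdA, hm2]
    have h21 : m + 2 - 1 = m + 1 := rfl
    rw [h21, map_neg, C_1]
    ring
  have hg1 : ((C 2 * X + C b') * A ^ (m + 1)).coeff (m + 1) = (A ^ (m+2)).coeff (m + 2) := by
    rw [hder, coeff_neg, coeff_derivative]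
    have h' : (A ^ (m + 2)).coeff (m + 1 + 1) = (A ^ (m+2)).coeff (m + 2) := rfl
    rw [h', hm1]
    ring
  have hg0 : ((C 2 * X + C b') * A ^ (m + 1)).coeff m = 2 * (A ^ (m+2)).coeff (m + 1) := by
    rw [hder, coeff_neg, coeff_derivative, hm0]
    ring
  have hS2 : (4 * c' - b' ^ 2) * (A ^ (m+1)).coeff (m+1)
      = -(b' * (A ^ (m+2)).coeff (m+2)) := by
    have hC : C (4 * c' - b' ^ 2) = C 4 * C c' - C b' ^ 2 := by
      rw [map_sub, map_mul, map_pow]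
    have hfac : C 4 * A ^ (m + 2) = (C 2 * X + C b') * ((C 2 * X + C b') * A ^ (m+1))
        + C (4 * c' - b' ^ 2) * A ^ (m+1) := by
      rw [hC, show A ^ (m+2) = A * A ^ (m+1) from pow_succ' A (m+1), hA,
        ]
      simp only [map_ofNat]
      ring
    have h := congrArg (fun f => Polynomial.coeff f (m + 1)) hfac
    simp only [coeff_add, coeff_C_mul] at h
    rw [add_mul, coeff_add, mul_assoc, coeff_C_mul, coeff_C_mul, hg1] at h
    have hxg : (X * ((C 2 * X + C b') * A ^ (m+1))).coeff (m+1)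
        = ((C 2 * X + C b') * A ^ (m+1)).coeff m := coeff_X_mul _ m
    rw [hxg, hg0] at h
    linear_combination -h
  linear_combination hS2 - hS1
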